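/- Let n ≥ 1 and a ≥ 0 be natural numbers, let p ∈ MvPolynomial (Fin n) ℝ be harmonic and homogeneous of degree a, and define f : EuclideanSpace ℝ (Fin n) → ℝ by f x = ‖x‖ ^ (−(a:ℝ)) * (MvPolynomial.eval (fun i => x i) p) (real power). Then for every x ≠ 0, the Laplacian of f at x (the sum over the standard orthonormal basis vectors eᵢ of the second directional derivatives of f at x along eᵢ, i.e. the trace of the second Fréchet derivative of f at x) equals −(a * (a + n − 2)) * ‖x‖ ^ (−2:ℝ) * f x. -/

import Mathlib

open MvPolynomial

section Aux
variable {n : ℕ}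

private lemma euler_mono' (s : Fin n →₀ ℕ) (r : ℝ) (i : Fin n) :
    X i * pderiv i (monomial s r) = (s i) • monomial s r := by
  rw [pderiv_monomial]
  rcases Nat.eq_zero_or_pos (s i) with h | h
  · simp [h]
  · rw [X, monomial_mul, one_mul]
    have : Finsupp.single i 1 + (s - Finsupp.single i 1) = s := by
      ext j
      rcases eq_or_ne j i with rfl | hj
      · simp [Finsupp.single_apply]; omega
      · simp [Finsupp.single_apply, hj.symm, Ne.symm hj]
    rw [this, smul_monomial]
    congr 1
    push_cast
    ring

private lemma euler_poly' (a : ℕ) (p : MvPolynomial (Fin n) ℝ) (hp : p.IsHomogeneous a) :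
    ∑ i, X i * pderiv i p = a • p := by
  conv_lhs => rw [p.as_sum]
  conv_rhs => rw [p.as_sum]
  simp_rw [map_sum, Finset.mul_sum, Finset.smul_sum]
  rw [Finset.sum_comm]
  refine Finset.sum_congr rfl fun s hs => ?_
  have hdeg : ∑ i, s i = a := by
    have h2 := hp (mem_support_iff.mp hs)
    rw [Finsupp.weight_apply] at h2
    simp only [Finsupp.sum, Pi.one_apply, smul_eq_mul, mul_one] at h2
    have h3 : ∑ i ∈ s.support, s i = ∑ i, s i :=
      Finset.sum_subset (Finset.subset_univ _) (fun i _ hi => Finsupp.notMem_support_iff.mp hi)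
    rw [← h3]; exact h2
  calc ∑ i, X i * pderiv i (monomial s (coeff s p))
      = ∑ i, (s i) • monomial s (coeff s p) := by simp_rw [euler_mono']
    _ = a • monomial s (coeff s p) := by rw [← Finset.sum_smul, hdeg]

private lemma euler_eval' (a : ℕ) (p : MvPolynomial (Fin n) ℝ) (hp : p.IsHomogeneous a)
    (y : Fin n → ℝ) :
    ∑ i, y i * MvPolynomial.eval y (pderiv i p) = (a : ℝ) * MvPolynomial.eval y p := by
  have h := congrArg (MvPolynomial.eval y) (euler_poly' a p hp)
  simpa [map_sum, Finset.mul_sum] using h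

private noncomputable def pgrad (q : MvPolynomial (Fin n) ℝ) (x : EuclideanSpace ℝ (Fin n)) :
    EuclideanSpace ℝ (Fin n) →L[ℝ] ℝ :=
  ∑ j, MvPolynomial.eval (fun i => x i) (pderiv j q) • EuclideanSpace.proj j

private lemma pgrad_apply (q : MvPolynomial (Fin n) ℝ) (x : EuclideanSpace ℝ (Fin n))
    (v : EuclideanSpace ℝ (Fin n)) :
    pgrad q x v = ∑ j, MvPolynomial.eval (fun i => x i) (pderiv j q) * v j := by
  simp [pgrad]

private lemma pgrad_single (q : MvPolynomial (Fin n) ℝ) (x : EuclideanSpace ℝ (Fin n))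
    (i : Fin n) :
    pgrad q x (EuclideanSpace.single i 1) = MvPolynomial.eval (fun j => x j) (pderiv i q) := by
  rw [pgrad_apply]
  rw [Finset.sum_eq_single i]
  · simp
  · intro j _ hj
    rw [EuclideanSpace.single_apply, if_neg hj, mul_zero]
  · simp

private lemma hasFDerivAt_peval (q : MvPolynomial (Fin n) ℝ) (x : EuclideanSpace ℝ (Fin n)) :
    HasFDerivAt (fun y : EuclideanSpace ℝ (Fin n) => MvPolynomial.eval (fun i => y i) q)
      (pgrad q x) x := by
  induction q using MvPolynomial.induction_on with
  | C r =>
      have : pgrad (C r) x = 0 := by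
        unfold pgrad; simp
      rw [this]
      simpa using hasFDerivAt_const r x
  | add p q hp hq =>
      have : pgrad (p + q) x = pgrad p x + pgrad q x := by
        unfold pgrad
        simp [add_smul, Finset.sum_add_distrib]
      rw [this]
      exact (hp.add hq).congr_of_eventuallyEq (Filter.Eventually.of_forall fun y => by simp)
  | mul_X p j hp =>
      have hXj : HasFDerivAt (fun y : EuclideanSpace ℝ (Fin n) => y j)
          ((EuclideanSpace.proj j : EuclideanSpace ℝ (Fin n) →L[ℝ] ℝ)) x :=
        (EuclideanSpace.proj j : EuclideanSpace ℝ (Fin n) →L[ℝ] ℝ).hasFDerivAt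
      have h := hp.mul hXj
      have heq : pgrad (p * X j) x =
          (MvPolynomial.eval (fun i => x i) p) • EuclideanSpace.proj j + x j • pgrad p x := by
        unfold pgrad
        rw [Finset.smul_sum]
        have : ∀ k : Fin n, MvPolynomial.eval (fun i => x i) (pderiv k (p * X j)) •
            (EuclideanSpace.proj k : EuclideanSpace ℝ (Fin n) →L[ℝ] ℝ)
            = (x j * MvPolynomial.eval (fun i => x i) (pderiv k p)) • EuclideanSpace.proj k
              + (if k = j then MvPolynomial.eval (fun i => x i) p else 0) • EuclideanSpace.proj k := by
          intro k
          rw [← add_smul]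
          congr 1
          rw [pderiv_mul, pderiv_X]
          rcases eq_or_ne k j with rfl | hkj
          · simp [Pi.single_apply]; ring
          · simp [Pi.single_apply, hkj]; ring
        simp_rw [this]
        rw [Finset.sum_add_distrib]
        rw [add_comm]
        congr 1
        · rw [Finset.sum_eq_single j] <;> simp +contextual [eq_comm]
        · simp_rw [mul_smul]
      rw [heq]
      exact h.congr_of_eventuallyEq (Filter.Eventually.of_forall fun y => by simp)

end Aux


/-- If `p` is harmonic and homogeneous of degree `a`, then the degree-zero homogeneous extension
`f x = ‖x‖^(−a) · p(x)` of its restriction to the unit sphere satisfies, at every `x ≠ 0`,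
`Δf(x) = −a(a + n − 2) ‖x‖⁻² f(x)`, where `Δf(x)` is the sum over the standard orthonormal basis
of the second directional derivatives of `f` (the trace of the second Fréchet derivative). -/
theorem laplacian_homogeneous_extension_eq (n a : ℕ) (hn : 1 ≤ n)
    (p : MvPolynomial (Fin n) ℝ)
    (hhom : p ∈ homogeneousSubmodule (Fin n) ℝ a)
    (hharm : (∑ i, pderiv i (pderiv i p)) = 0)
    (f : EuclideanSpace ℝ (Fin n) → ℝ)
    (hf : ∀ x : EuclideanSpace ℝ (Fin n),
      f x = ‖x‖ ^ (-(a : ℝ)) * MvPolynomial.eval (fun i => x i) p)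
    (x : EuclideanSpace ℝ (Fin n)) (hx : x ≠ 0) :
    ∑ i, fderiv ℝ (fun y => fderiv ℝ f y (EuclideanSpace.single i 1)) x
        (EuclideanSpace.single i 1) =
      -((a : ℝ) * ((a : ℝ) + n - 2)) * ‖x‖ ^ (-2 : ℝ) * f x := by
  classical
  set q2 : MvPolynomial (Fin n) ℝ := ∑ i, (X i) ^ 2 with hq2def
  set c : ℝ := -(a : ℝ) / 2 with hc
  -- evaluation of q2
  have hq2eval : ∀ y : EuclideanSpace ℝ (Fin n),
      MvPolynomial.eval (fun i => y i) q2 = ∑ i, (y i) ^ 2 := by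
    intro y; simp [hq2def]
  have hq2pd : ∀ (y : EuclideanSpace ℝ (Fin n)) (j : Fin n),
      MvPolynomial.eval (fun i => y i) (pderiv j q2) = 2 * y j := by
    intro y j
    have : pderiv j q2 = 2 * X j := by
      rw [hq2def, map_sum]
      rw [Finset.sum_eq_single j]
      · rw [pow_two, pderiv_mul, pderiv_X]; simp; ring
      · intro i _ hij
        rw [pow_two, pderiv_mul, pderiv_X]
        simp [Pi.single_apply, hij]
      · simp
    rw [this]; simp
  -- norm facts
  have hnormsq : ∀ y : EuclideanSpace ℝ (Fin n),
      ‖y‖ ^ 2 = MvPolynomial.eval (fun i => y i) q2 := by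
    intro y
    rw [hq2eval, EuclideanSpace.norm_eq]
    simp only [Real.norm_eq_abs, sq_abs]
    exact Real.sq_sqrt (Finset.sum_nonneg fun i _ => sq_nonneg _)
  have hMpos : (0 : ℝ) < MvPolynomial.eval (fun i => x i) q2 := by
    rw [← hnormsq]
    have h0 : 0 < ‖x‖ := norm_pos_iff.mpr hx
    exact pow_pos h0 2
  -- f as rpow of q2
  have hfF : ∀ y : EuclideanSpace ℝ (Fin n),
      f y = (MvPolynomial.eval (fun i => y i) q2) ^ c * MvPolynomial.eval (fun i => y i) p := by
    intro y
    rw [hf y, ← hnormsq]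
    congr 1
    rw [← Real.rpow_natCast ‖y‖ 2, ← Real.rpow_mul (norm_nonneg y)]
    rw [hc]
    congr 1
    ring
  -- first derivative of f at nonzero points
  have hfd : ∀ y : EuclideanSpace ℝ (Fin n), y ≠ 0 →
      HasFDerivAt f
        ((MvPolynomial.eval (fun i => y i) q2 ^ c) • pgrad p y
          + (MvPolynomial.eval (fun i => y i) p) •
              ((c * MvPolynomial.eval (fun i => y i) q2 ^ (c - 1)) • pgrad q2 y)) y := by
    intro y hy
    have hMy : (0:ℝ) < MvPolynomial.eval (fun i => y i) q2 := by
      rw [← hnormsq]; exact pow_pos (norm_pos_iff.mpr hy) 2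
    have hNy := hasFDerivAt_peval q2 y
    have hrp : HasDerivAt (fun t : ℝ => t ^ c)
        (c * (MvPolynomial.eval (fun i => y i) q2) ^ (c - 1))
        (MvPolynomial.eval (fun i => y i) q2) :=
      Real.hasDerivAt_rpow_const (Or.inl hMy.ne')
    have hcomp := hrp.comp_hasFDerivAt y hNy
    have hP := hasFDerivAt_peval p y
    have hmul := hcomp.mul hP
    have hfeq : f = fun z => (MvPolynomial.eval (fun i => z i) q2) ^ c *
        MvPolynomial.eval (fun i => z i) p := funext hfF
    rw [hfeq]
    exact hmul
  -- the first directional derivatives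
  have hfd1 : ∀ y : EuclideanSpace ℝ (Fin n), y ≠ 0 → ∀ i : Fin n,
      fderiv ℝ f y (EuclideanSpace.single i 1) =
        (MvPolynomial.eval (fun j => y j) q2) ^ c *
            MvPolynomial.eval (fun j => y j) (pderiv i p)
          + MvPolynomial.eval (fun j => y j) p *
              ((2 * c) * ((MvPolynomial.eval (fun j => y j) q2) ^ (c - 1) * y i)) := by
    intro y hy i
    rw [(hfd y hy).fderiv]
    simp only [ContinuousLinearMap.add_apply, ContinuousLinearMap.smul_apply, pgrad_single,
      hq2pd, smul_eq_mul]
    ring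
  -- second directional derivatives
  have hsd : ∀ i : Fin n,
      fderiv ℝ (fun y => fderiv ℝ f y (EuclideanSpace.single i 1)) x
          (EuclideanSpace.single i 1) =
        (MvPolynomial.eval (fun j => x j) q2) ^ c *
            MvPolynomial.eval (fun j => x j) (pderiv i (pderiv i p))
          + (4 * c * (MvPolynomial.eval (fun j => x j) q2) ^ (c - 1)) *
              (x i * MvPolynomial.eval (fun j => x j) (pderiv i p))
          + (4 * c * (c - 1) * (MvPolynomial.eval (fun j => x j) q2) ^ (c - 1 - 1) *
              MvPolynomial.eval (fun j => x j) p) * (x i) ^ 2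
          + 2 * c * (MvPolynomial.eval (fun j => x j) q2) ^ (c - 1) *
              MvPolynomial.eval (fun j => x j) p := by
    intro i
    have hrpow : ∀ d : ℝ, HasFDerivAt
        (fun y : EuclideanSpace ℝ (Fin n) => (MvPolynomial.eval (fun j => y j) q2) ^ d)
        ((d * (MvPolynomial.eval (fun j => x j) q2) ^ (d - 1)) • pgrad q2 x) x := by
      intro d
      exact (Real.hasDerivAt_rpow_const (Or.inl hMpos.ne')).comp_hasFDerivAt x
        (hasFDerivAt_peval q2 x)
    have h1 := hrpow c
    have h2 := hasFDerivAt_peval (pderiv i p) x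
    have h12 := h1.mul h2
    have h3 := hasFDerivAt_peval p x
    have h4 := hrpow (c - 1)
    have h5 : HasFDerivAt (fun y : EuclideanSpace ℝ (Fin n) => y i)
        ((EuclideanSpace.proj i : EuclideanSpace ℝ (Fin n) →L[ℝ] ℝ)) x :=
      (EuclideanSpace.proj i : EuclideanSpace ℝ (Fin n) →L[ℝ] ℝ).hasFDerivAt
    have h45 := h4.mul h5
    have hc45 := h45.const_mul (2 * c)
    have hG2 := h3.mul hc45
    have hG := h12.add hG2
    have hev : (fun y => fderiv ℝ f y (EuclideanSpace.single i 1)) =ᶠ[nhds x]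
        (fun y => (MvPolynomial.eval (fun j => y j) q2) ^ c *
            MvPolynomial.eval (fun j => y j) (pderiv i p)
          + MvPolynomial.eval (fun j => y j) p *
              ((2 * c) * ((MvPolynomial.eval (fun j => y j) q2) ^ (c - 1) * y i))) := by
      filter_upwards [IsOpen.mem_nhds isOpen_compl_singleton hx] with y hy
      exact hfd1 y hy i
    rw [hev.fderiv_eq, (show HasFDerivAt (fun y : EuclideanSpace ℝ (Fin n) =>
        (MvPolynomial.eval (fun j => y j) q2) ^ c * MvPolynomial.eval (fun j => y j) (pderiv i p)
          + MvPolynomial.eval (fun j => y j) p *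
              ((2 * c) * ((MvPolynomial.eval (fun j => y j) q2) ^ (c - 1) * y i))) _ x
        from hG).fderiv]
    simp only [ContinuousLinearMap.add_apply, ContinuousLinearMap.smul_apply, pgrad_single,
      hq2pd, smul_eq_mul, Pi.mul_apply, PiLp.proj_apply, EuclideanSpace.single_apply, eq_self_iff_true, if_true]
    ring
  simp only [hsd]
  -- summation identities
  have hD2 : ∑ i, MvPolynomial.eval (fun j => x j) (pderiv i (pderiv i p)) = 0 := by
    have h := congrArg (MvPolynomial.eval (fun j => x j)) hharm
    simpa [map_sum] using h
  have hE : ∑ i, x i * MvPolynomial.eval (fun j => x j) (pderiv i p)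
      = (a : ℝ) * MvPolynomial.eval (fun j => x j) p :=
    euler_eval' a p hhom (fun j => x j)
  have hSq : ∑ i, (x i) ^ 2 = MvPolynomial.eval (fun j => x j) q2 := (hq2eval x).symm
  rw [Finset.sum_add_distrib, Finset.sum_add_distrib, Finset.sum_add_distrib,
    ← Finset.mul_sum, ← Finset.mul_sum, ← Finset.mul_sum, hD2, hE, hSq,
    Finset.sum_const, Finset.card_univ, Fintype.card_fin, nsmul_eq_mul]
  -- rpow bookkeeping
  have hninv : ‖x‖ ^ (-2 : ℝ) = (MvPolynomial.eval (fun j => x j) q2)⁻¹ := by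
    rw [← hnormsq, show (-2 : ℝ) = -((2 : ℕ) : ℝ) by norm_num,
      Real.rpow_neg (norm_nonneg x), Real.rpow_natCast]
  have hA : (MvPolynomial.eval (fun j => x j) q2) ^ (c - 1)
      = (MvPolynomial.eval (fun j => x j) q2) ^ c *
        (MvPolynomial.eval (fun j => x j) q2)⁻¹ := by
    rw [Real.rpow_sub hMpos, Real.rpow_one, div_eq_mul_inv]
  have hB : (MvPolynomial.eval (fun j => x j) q2) ^ (c - 1 - 1)
      = (MvPolynomial.eval (fun j => x j) q2) ^ c *
        (MvPolynomial.eval (fun j => x j) q2)⁻¹ *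
        (MvPolynomial.eval (fun j => x j) q2)⁻¹ := by
    rw [Real.rpow_sub hMpos (c - 1) 1, Real.rpow_one, hA, div_eq_mul_inv]
  rw [hninv, hfF x, hA, hB, hc]
  field_simp
  ring
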